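/- Let M be a finite free ℤ-module with a negative definite symmetric bilinear form ⟨·,·⟩ and a fixed basis e₁,…,e_r with ⟨e_i,e_j⟩ ≥ 0 for i ≠ j. If Z = Σ a_i e_i with all a_i ≥ 0, Z ≠ 0, and ⟨Z, e_i⟩ ≤ 0 for all i (Z is anti-nef), then a_i ≥ 1 for all i, i.e., Z ≥ Σ e_i. -/
import Mathlib


open Matrix Finset

/-- Let `M` be a finite free `ℤ`-module with a negative definite
symmetric bilinear form (given by the matrix `B` in the fixed basis `e₁, …, e_r`),
with `⟨eᵢ, eⱼ⟩ ≥ 0` for `i ≠ j` and connected dual graph.  If `Z = Σ aᵢeᵢ` has all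
`aᵢ ≥ 0`, `Z ≠ 0` and `⟨Z, eᵢ⟩ ≤ 0` for all `i` (i.e. `Z` is anti-nef), then
`aᵢ ≥ 1` for all `i`, i.e. `Z ≥ Σ eᵢ`. -/
theorem nonzero_antinef_dominates_reduced_cycle
    (r : ℕ) (B : Matrix (Fin r) (Fin r) ℤ)
    (hsymm : B.IsSymm)
    (hneg : ∀ v : Fin r → ℤ, v ≠ 0 → v ⬝ᵥ B.mulVec v < 0)
    (hoff : ∀ i j, i ≠ j → 0 ≤ B i j)
    (hconn : ∀ S : Finset (Fin r), S.Nonempty → S ≠ Finset.univ →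
      ∃ i ∈ S, ∃ j, j ∉ S ∧ 0 < B i j)
    (Z : Fin r → ℤ) (hZnn : 0 ≤ Z) (hZne : Z ≠ 0)
    (hanef : ∀ i, B.mulVec Z i ≤ 0) :
    ∀ i, 1 ≤ Z i := by
  intro i
  by_contra h
  push_neg at h
  have hZi : Z i = 0 := le_antisymm (by omega) (hZnn i)
  set S : Finset (Fin r) := Finset.univ.filter (fun k => 1 ≤ Z k) with hS
  have hSne : S.Nonempty := by
    obtain ⟨k, hk⟩ := Function.ne_iff.mp hZne
    exact ⟨k, by simp only [hS, Finset.mem_filter, Finset.mem_univ, true_and]; have h0 : (0:ℤ) ≤ Z k := hZnn k; have h1 : Z k ≠ (0:ℤ) := hk; omega⟩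
  have hSnotuniv : S ≠ Finset.univ := by
    intro hc
    have : i ∈ S := hc ▸ Finset.mem_univ i
    simp [hS] at this
    omega
  obtain ⟨a, ha, b, hb, hab⟩ := hconn S hSne hSnotuniv
  have haZ : 1 ≤ Z a := by simpa [hS] using ha
  have hpos : 0 < B.mulVec Z b := by
    have hba : 0 < B b a := by
      have := congrFun (congrFun hsymm a) b
      simp [Matrix.transpose_apply] at this
      omega
    have hne : a ≠ b := by rintro rfl; exact hb ha
    simp only [Matrix.mulVec, dotProduct]
    have : (0:ℤ) < B b a * Z a := mul_pos hba (by omega)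
    refine Finset.sum_pos' (fun m _ => ?_) ⟨a, Finset.mem_univ a, this⟩
    by_cases hk : m = b
    · subst hk
      have h0 : (0:ℤ) ≤ Z m := hZnn m
      have h1 : ¬ (1 ≤ Z m) := by simpa [hS] using hb
      have hZb : Z m = 0 := by omega
      simp [hZb]
    · exact mul_nonneg (hoff b m (Ne.symm hk)) (hZnn m)
  exact absurd (hanef b) (not_le.mpr hpos)
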